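/- If A_n = A^{⊗n} C_n is a multiplicative decomposition for each n (with A a fixed algebra), then for an A_m-module M and an A_n-module N, there is a multiplicative decomposition A_m ⊗ A_n = A^{⊗(m+n)}(C_m ⊗ C_n), and the natural morphism (M ⊗ N) ⊗_{C_m ⊗ C_n} C_{m+n} → (M ⊗ N) ⊗_{A_m ⊗ A_n} A_{m+n} is an isomorphism. -/

import Mathlib

set_option synthInstance.maxHeartbeats 1000000
set_option maxHeartbeats 1000000
set_option maxSynthPendingDepth 5

open TensorProduct

set_option maxHeartbeats 10000000
set_option synthInstance.maxHeartbeats 10000000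


section MSDAux
variable {k : Type*} [CommSemiring k]
variable {A : Type*} [Semiring A] [Algebra k A]
variable (k) in
/-- the right action of `A` on `M` as a linear map in both variables -/
noncomputable def msdRsmul (M : Type*) [AddCommMonoid M] [Module k M] [Module Aᵐᵒᵖ M]
    [IsScalarTower k Aᵐᵒᵖ M] : A →ₗ[k] M →ₗ[k] M where
  toFun a :=
    { toFun := fun m => MulOpposite.op a • m
      map_add' := fun _ _ => smul_add _ _ _
      map_smul' := fun r m => (smul_comm r (MulOpposite.op a) m).symm }
  map_add' a b := by ext m; simp [MulOpposite.op_add, add_smul]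
  map_smul' r a := by ext m; simp [MulOpposite.op_smul, smul_assoc]

variable (M : Type*) [AddCommMonoid M] [Module k M] [Module Aᵐᵒᵖ M] [IsScalarTower k Aᵐᵒᵖ M]

@[simp] lemma msdRsmul_apply (a : A) (m : M) : msdRsmul k M a m = MulOpposite.op a • m := rfl

lemma msdRsmul_one : msdRsmul k M (1 : A) = LinearMap.id := by ext m; simp

lemma msdRsmul_mul (a b : A) :
    msdRsmul k M (a * b) = (msdRsmul k M b).comp (msdRsmul k M a) := by
  ext m; simp [MulOpposite.op_mul, mul_smul]

end MSDAux


/-- Let `C_* ⊆ A_*` be an embedding of multiplicative sequences of algebras such that each `Aₙ`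
admits a multiplicative decomposition `Aₙ = A^{⊗n}Cₙ` for a fixed algebra `A`.  Then for a
right `A_m`-module `M` and a right `A_n`-module `N` there is a multiplicative decomposition
`A_m ⊗ A_n = A^{⊗(m+n)}(C_m ⊗ C_n)`, and the natural morphism
`(M ⊗ N) ⊗_{C_m ⊗ C_n} C_{m+n} → (M ⊗ N) ⊗_{A_m ⊗ A_n} A_{m+n}` is an isomorphism.
Here `A_m, A_n, A_{m+n}` are the algebras `Am, An, Amn` with multiplication map `μ`, the
`A^{⊗m}`-parts are the subalgebras `Tm, Tn, Tmn`, and the relative tensor products are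
realized as quotients of tensor products over `k` by the balancing relations. -/
theorem multiplicative_sequence_decomposition_tensor_iso
    {k : Type*} [Field k]
    {Am An Amn : Type*} [Ring Am] [Ring An] [Ring Amn]
    [Algebra k Am] [Algebra k An] [Algebra k Amn]
    (μ : Am ⊗[k] An →ₐ[k] Amn)
    (Tm Cm : Subalgebra k Am) (Tn Cn : Subalgebra k An) (Cmn : Subalgebra k Amn)
    -- the decompositions `A_m = A^{⊗m}C_m` and `A_n = A^{⊗n}C_n`
    (hAm : Function.Bijective
      ⇑(TensorProduct.lift (((LinearMap.mul k Am).comp Tm.val.toLinearMap).compl₂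
          Cm.val.toLinearMap)))
    (hAn : Function.Bijective
      ⇑(TensorProduct.lift (((LinearMap.mul k An).comp Tn.val.toLinearMap).compl₂
          Cn.val.toLinearMap)))
    -- the decomposition `A_{m+n} = A^{⊗(m+n)}C_{m+n}`, with
    -- `A^{⊗(m+n)} = A^{⊗m} ⊗ A^{⊗n}` embedded via `μ`
    (hAmn : Function.Bijective
      ⇑(TensorProduct.lift (((LinearMap.mul k Amn).comp
          (μ.comp (Algebra.TensorProduct.map Tm.val Tn.val)).toLinearMap).compl₂
          Cmn.val.toLinearMap)))
    -- `C_* ⊆ A_*` is an embedding of multiplicative sequences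
    (hμC : ∀ (c : ↥Cm) (d : ↥Cn), μ ((c : Am) ⊗ₜ (d : An)) ∈ Cmn)
    -- right modules `M` over `A_m` and `N` over `A_n`
    (M N : Type*) [AddCommGroup M] [Module k M] [Module Amᵐᵒᵖ M] [IsScalarTower k Amᵐᵒᵖ M]
    [AddCommGroup N] [Module k N] [Module Anᵐᵒᵖ N] [IsScalarTower k Anᵐᵒᵖ N]
    -- balancing relations defining `(M ⊗ N) ⊗_{C_m ⊗ C_n} C_{m+n}`
    (R₁ : Submodule k ((M ⊗[k] N) ⊗[k] ↥Cmn))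
    (hR₁ : R₁ = Submodule.span k {x | ∃ (m : M) (n : N) (c : ↥Cm) (d : ↥Cn) (z : ↥Cmn),
      x = ((MulOpposite.op (c : Am) • m) ⊗ₜ (MulOpposite.op (d : An) • n)) ⊗ₜ z
        - (m ⊗ₜ n) ⊗ₜ ((⟨μ ((c : Am) ⊗ₜ (d : An)), hμC c d⟩ : ↥Cmn) * z)})
    -- balancing relations defining `(M ⊗ N) ⊗_{A_m ⊗ A_n} A_{m+n}`
    (R₂ : Submodule k ((M ⊗[k] N) ⊗[k] Amn))
    (hR₂ : R₂ = Submodule.span k {x | ∃ (m : M) (n : N) (a : Am) (b : An) (z : Amn),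
      x = ((MulOpposite.op a • m) ⊗ₜ (MulOpposite.op b • n)) ⊗ₜ z
        - (m ⊗ₜ n) ⊗ₜ (μ (a ⊗ₜ b) * z)})
    (hcomp : R₁ ≤ R₂.comap (LinearMap.lTensor (M ⊗[k] N) Cmn.val.toLinearMap)) :
    -- (a) the multiplicative decomposition `A_m ⊗ A_n = A^{⊗(m+n)}(C_m ⊗ C_n)`
    Function.Bijective
      ⇑(TensorProduct.lift (((LinearMap.mul k (Am ⊗[k] An)).comp
          (Algebra.TensorProduct.map Tm.val Tn.val).toLinearMap).compl₂
          (Algebra.TensorProduct.map Cm.val Cn.val).toLinearMap)) ∧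
    -- (b) the natural morphism between the relative tensor products is an isomorphism
    Function.Bijective
      ⇑(Submodule.mapQ R₁ R₂ (LinearMap.lTensor (M ⊗[k] N) Cmn.val.toLinearMap) hcomp) := by
  constructor
  · -- part (a)
    let em := LinearEquiv.ofBijective _ hAm
    let en := LinearEquiv.ofBijective _ hAn
    let E := (TensorProduct.tensorTensorTensorComm k ↥Tm ↥Tn ↥Cm ↥Cn).trans
      (TensorProduct.congr em en)
    have hF : (TensorProduct.lift (((LinearMap.mul k (Am ⊗[k] An)).comp
            (Algebra.TensorProduct.map Tm.val Tn.val).toLinearMap).compl₂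
            (Algebra.TensorProduct.map Cm.val Cn.val).toLinearMap)) = E.toLinearMap := by
      apply TensorProduct.ext_fourfold'
      intro t t' c c'
      simp [E, em, en, TensorProduct.congr, Algebra.TensorProduct.tmul_mul_tmul]
    rw [hF]
    exact E.bijective
  · -- part (b)
    set ι : ↥Cmn →ₗ[k] Amn := Cmn.val.toLinearMap with hιdef
    set G : (↥Tm ⊗[k] ↥Tn) ⊗[k] ↥Cmn →ₗ[k] Amn :=
      TensorProduct.lift (((LinearMap.mul k Amn).comp
        (μ.comp (Algebra.TensorProduct.map Tm.val Tn.val)).toLinearMap).compl₂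
        Cmn.val.toLinearMap) with hGdef
    let β : ((↥Tm ⊗[k] ↥Tn) ⊗[k] ↥Cmn) ≃ₗ[k] Amn := LinearEquiv.ofBijective G hAmn
    have hG : ∀ (w : ↥Tm ⊗[k] ↥Tn) (e : ↥Cmn),
        G (w ⊗ₜ e) = μ (Algebra.TensorProduct.map Tm.val Tn.val w) * (e : Amn) := by
      intro w e; rw [hGdef, TensorProduct.lift.tmul]; rfl
    let B : ((M ⊗[k] N) ⊗[k] ((↥Tm ⊗[k] ↥Tn) ⊗[k] ↥Cmn)) ≃ₗ[k] ((M ⊗[k] N) ⊗[k] Amn) :=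
      TensorProduct.congr (LinearEquiv.refl k (M ⊗[k] N)) β
    have hB : ∀ (x : M ⊗[k] N) (v : (↥Tm ⊗[k] ↥Tn) ⊗[k] ↥Cmn), B (x ⊗ₜ v) = x ⊗ₜ G v := by
      intro x v; simp [B, TensorProduct.congr_tmul]; rfl
    -- the action of `Am ⊗ An` on `M ⊗ N`
    let act2 : (Am ⊗[k] An) →ₗ[k] ((M ⊗[k] N) →ₗ[k] (M ⊗[k] N)) :=
      (TensorProduct.homTensorHomMap (RingHom.id k) M N M N).comp
        (TensorProduct.map (msdRsmul k M) (msdRsmul k N))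
    have act2_tmul : ∀ (a : Am) (b : An),
        act2 (a ⊗ₜ b) = TensorProduct.map (msdRsmul k M a) (msdRsmul k N b) := by
      intro a b; simp [act2]
    have hact_mul : ∀ (a a' : Am) (b b' : An),
        act2 ((a * a') ⊗ₜ (b * b')) = (act2 (a' ⊗ₜ b')).comp (act2 (a ⊗ₜ b)) := by
      intro a a' b b'
      rw [act2_tmul, act2_tmul, act2_tmul, msdRsmul_mul, msdRsmul_mul,
        TensorProduct.map_comp]
    let actT : (↥Tm ⊗[k] ↥Tn) →ₗ[k] ((M ⊗[k] N) →ₗ[k] (M ⊗[k] N)) :=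
      act2.comp (Algebra.TensorProduct.map Tm.val Tn.val).toLinearMap
    have actT_tmul : ∀ (t : ↥Tm) (t' : ↥Tn),
        actT (t ⊗ₜ t') = act2 ((t : Am) ⊗ₜ (t' : An)) := by
      intro t t'; simp [actT]
    let Φ : ((M ⊗[k] N) ⊗[k] (↥Tm ⊗[k] ↥Tn)) →ₗ[k] (M ⊗[k] N) :=
      TensorProduct.lift actT.flip
    let γ : ((M ⊗[k] N) ⊗[k] ((↥Tm ⊗[k] ↥Tn) ⊗[k] ↥Cmn)) →ₗ[k] ((M ⊗[k] N) ⊗[k] ↥Cmn) :=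
      (LinearMap.rTensor ↥Cmn Φ).comp
        (TensorProduct.assoc k (M ⊗[k] N) (↥Tm ⊗[k] ↥Tn) ↥Cmn).symm.toLinearMap
    have γ_tmul : ∀ (x : M ⊗[k] N) (w : ↥Tm ⊗[k] ↥Tn) (e : ↥Cmn),
        γ (x ⊗ₜ (w ⊗ₜ e)) = (actT w x) ⊗ₜ e := by
      intro x w e; simp [γ, Φ]
    -- the candidate inverse, before quotienting
    let p : ((M ⊗[k] N) ⊗[k] Amn) →ₗ[k] (((M ⊗[k] N) ⊗[k] ↥Cmn) ⧸ R₁) :=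
      (R₁.mkQ.comp γ).comp B.symm.toLinearMap
    have hPβ : ∀ (x : M ⊗[k] N) (w : ↥Tm ⊗[k] ↥Tn) (e : ↥Cmn),
        p (x ⊗ₜ G (w ⊗ₜ e)) = R₁.mkQ ((actT w x) ⊗ₜ e) := by
      intro x w e
      have h1 : B.symm (x ⊗ₜ G (w ⊗ₜ e)) = x ⊗ₜ (w ⊗ₜ e) := by
        rw [← hB]; exact B.symm_apply_apply _
      simp only [p, LinearMap.comp_apply, LinearEquiv.coe_coe, h1, γ_tmul]
    -- Claim E : moving `Cm ⊗ Cn` across, modulo `R₁`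
    have hE : ∀ (c : ↥Cm) (d : ↥Cn) (y : M ⊗[k] N) (e : ↥Cmn),
        R₁.mkQ ((act2 ((c : Am) ⊗ₜ (d : An)) y) ⊗ₜ e)
          = R₁.mkQ (y ⊗ₜ ((⟨μ ((c : Am) ⊗ₜ (d : An)), hμC c d⟩ : ↥Cmn) * e)) := by
      intro c d y e
      induction y using TensorProduct.induction_on with
      | zero => simp
      | tmul m n =>
        rw [Submodule.mkQ_apply, Submodule.mkQ_apply]
        refine (Submodule.Quotient.eq R₁).mpr ?_
        rw [hR₁]
        refine Submodule.subset_span ⟨m, n, c, d, e, ?_⟩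
        simp [act2_tmul]
      | add y₁ y₂ h₁ h₂ =>
        rw [map_add, TensorProduct.add_tmul, TensorProduct.add_tmul, map_add, map_add, h₁, h₂]
    -- Claim D
    have hD : ∀ (a : Am) (b : An) (x : M ⊗[k] N) (e : ↥Cmn),
        R₁.mkQ ((act2 (a ⊗ₜ b) x) ⊗ₜ e) = p (x ⊗ₜ (μ (a ⊗ₜ b) * (e : Amn))) := by
      intro a b x e
      obtain ⟨u, rfl⟩ := hAm.2 a
      obtain ⟨v, rfl⟩ := hAn.2 b
      induction u using TensorProduct.induction_on with
      | zero =>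
        simp [TensorProduct.zero_tmul, TensorProduct.tmul_zero]
      | tmul t c =>
        induction v using TensorProduct.induction_on with
        | zero =>
          simp [TensorProduct.zero_tmul, TensorProduct.tmul_zero]
        | tmul t' d =>
          have ha : (TensorProduct.lift (((LinearMap.mul k Am).comp Tm.val.toLinearMap).compl₂
              Cm.val.toLinearMap)) (t ⊗ₜ c) = (t : Am) * (c : Am) := by simp
          have hb : (TensorProduct.lift (((LinearMap.mul k An).comp Tn.val.toLinearMap).compl₂
              Cn.val.toLinearMap)) (t' ⊗ₜ d) = (t' : An) * (d : An) := by simp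
          rw [ha, hb]
          have key : μ (((t : Am) * (c : Am)) ⊗ₜ ((t' : An) * (d : An))) * (e : Amn)
              = G ((t ⊗ₜ t') ⊗ₜ ((⟨μ ((c : Am) ⊗ₜ (d : An)), hμC c d⟩ : ↥Cmn) * e)) := by
            rw [hG]
            rw [← Algebra.TensorProduct.tmul_mul_tmul, map_mul]
            simp [mul_assoc]
          rw [key, hPβ, actT_tmul, hact_mul, LinearMap.comp_apply, hE]
        | add v₁ v₂ h₁ h₂ =>
          simp only [map_add, TensorProduct.tmul_add, TensorProduct.add_tmul,
            LinearMap.add_apply, add_mul, mul_add] at h₁ h₂ ⊢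
          rw [h₁, h₂]
      | add u₁ u₂ h₁ h₂ =>
        simp only [map_add, TensorProduct.tmul_add, TensorProduct.add_tmul,
          LinearMap.add_apply, add_mul, mul_add] at h₁ h₂ ⊢
        rw [h₁, h₂]
    -- Claim C
    have hC : ∀ (a : Am) (b : An) (x : M ⊗[k] N) (z : Amn),
        p ((act2 (a ⊗ₜ b) x) ⊗ₜ z) = p (x ⊗ₜ (μ (a ⊗ₜ b) * z)) := by
      intro a b x z
      obtain ⟨v, rfl⟩ := hAmn.2 z
      induction v using TensorProduct.induction_on with
      | zero => simp [TensorProduct.tmul_zero]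
      | tmul w e =>
        induction w using TensorProduct.induction_on with
        | zero =>
          rw [TensorProduct.zero_tmul, map_zero]
          simp [TensorProduct.tmul_zero]
        | tmul s s' =>
          rw [hPβ, actT_tmul, ← LinearMap.comp_apply, ← hact_mul, hD, hG]
          congr 2
          rw [← mul_assoc, ← map_mul, Algebra.TensorProduct.map_tmul,
            Algebra.TensorProduct.tmul_mul_tmul]
          rfl
        | add w₁ w₂ h₁ h₂ =>
          simp only [TensorProduct.add_tmul, map_add, TensorProduct.tmul_add, mul_add] at h₁ h₂ ⊢
          rw [h₁, h₂]
      | add v₁ v₂ h₁ h₂ =>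
        simp only [map_add, TensorProduct.tmul_add, mul_add] at h₁ h₂ ⊢
        rw [h₁, h₂]
    -- p kills R₂
    have hK3 : R₂ ≤ LinearMap.ker p := by
      rw [hR₂, Submodule.span_le]
      rintro x ⟨m, n, a, b, z, rfl⟩
      simp only [SetLike.mem_coe, LinearMap.mem_ker, map_sub, sub_eq_zero]
      calc p (((MulOpposite.op a • m) ⊗ₜ (MulOpposite.op b • n)) ⊗ₜ z)
          = p ((act2 (a ⊗ₜ b) (m ⊗ₜ n)) ⊗ₜ z) := by rw [act2_tmul]; rfl
        _ = p ((m ⊗ₜ n) ⊗ₜ (μ (a ⊗ₜ b) * z)) := hC a b (m ⊗ₜ n) z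
    -- p ∘ lTensor ι = mkQ R₁
    have hK1 : p.comp (LinearMap.lTensor (M ⊗[k] N) ι) = R₁.mkQ := by
      apply TensorProduct.ext'
      intro x e
      have h1e : G (((1 : ↥Tm) ⊗ₜ (1 : ↥Tn)) ⊗ₜ e) = (e : Amn) := by
        rw [hG]
        simp only [Algebra.TensorProduct.map_tmul, map_one, ← Algebra.TensorProduct.one_def,
          _root_.map_one, one_mul]
      have : LinearMap.lTensor (M ⊗[k] N) ι (x ⊗ₜ e) = x ⊗ₜ G (((1 : ↥Tm) ⊗ₜ (1 : ↥Tn)) ⊗ₜ e) := by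
        rw [h1e]; rfl
      rw [LinearMap.comp_apply, this, hPβ, actT_tmul, OneMemClass.coe_one,
        OneMemClass.coe_one, act2_tmul, msdRsmul_one, msdRsmul_one, TensorProduct.map_id]
      rfl
    -- mkQ R₂ ∘ lTensor ι ∘ γ = mkQ R₂ ∘ B
    have hK2 : (R₂.mkQ.comp (LinearMap.lTensor (M ⊗[k] N) ι)).comp γ
        = R₂.mkQ.comp B.toLinearMap := by
      apply TensorProduct.ext_fourfold'
      intro m n w e
      induction w using TensorProduct.induction_on with
      | zero =>
        simp [TensorProduct.zero_tmul, TensorProduct.tmul_zero, γ_tmul, hB]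
      | tmul s s' =>
        simp only [LinearMap.comp_apply, γ_tmul, hB, actT_tmul, act2_tmul,
          TensorProduct.map_tmul, msdRsmul_apply, hG, Algebra.TensorProduct.map_tmul]
        rw [Submodule.mkQ_apply, Submodule.mkQ_apply]
        refine (Submodule.Quotient.eq R₂).mpr ?_
        rw [hR₂]
        exact Submodule.subset_span ⟨m, n, (s : Am), (s' : An), (e : Amn), rfl⟩
      | add w₁ w₂ h₁ h₂ =>
        simp only [TensorProduct.add_tmul, TensorProduct.tmul_add, map_add,
          LinearMap.comp_apply] at h₁ h₂ ⊢
        rw [h₁, h₂]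
    -- assemble
    let φ := Submodule.mapQ R₁ R₂ (LinearMap.lTensor (M ⊗[k] N) ι) hcomp
    let pb := R₂.liftQ p hK3
    have hleft : ∀ y, pb (φ y) = y := by
      intro y
      obtain ⟨x, rfl⟩ := R₁.mkQ_surjective y
      rw [show R₁.mkQ x = Submodule.Quotient.mk x from rfl, Submodule.mapQ_apply,
        Submodule.liftQ_apply]
      exact DFunLike.congr_fun hK1 x
    have hright : ∀ y, φ (pb y) = y := by
      intro y
      obtain ⟨z, rfl⟩ := R₂.mkQ_surjective y
      obtain ⟨v, rfl⟩ := B.surjective z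
      rw [show R₂.mkQ (B v) = Submodule.Quotient.mk (B v) from rfl, Submodule.liftQ_apply]
      have hpz : p (B v) = R₁.mkQ (γ v) := by
        simp only [p, LinearMap.comp_apply, LinearEquiv.coe_coe, B.symm_apply_apply]
      rw [hpz, show R₁.mkQ (γ v) = Submodule.Quotient.mk (γ v) from rfl, Submodule.mapQ_apply]
      have := DFunLike.congr_fun hK2 v
      simpa only [LinearMap.comp_apply, Submodule.mkQ_apply, LinearEquiv.coe_coe] using this
    exact ⟨Function.LeftInverse.injective hleft, Function.RightInverse.surjective hright⟩
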